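/- For the function W one has W(Q) = {w ∈ ℂ : −π/2 < Im w < 0}, where Q = {z ∈ ℂ : Re z > 0 and Im z > 0} is the open first quadrant, and W((√(2+γ₀), ∞)) = (0, √3·π/9), where γ₀ = 2/(e^{2√3π/9} − 1). -/

import Mathlib

/-- The function `W` from the paper, extended arbitrarily off its natural domain. -/
noncomputable def Wfun (z : ℂ) : ℂ :=
  if z.im = 0 ∧ 0 < z.re ∧ z.re < Real.sqrt 2 then
    ((Real.log ‖1 + 2 / (z ^ 2 - 2)‖ / 2 : ℝ) : ℂ)
      - Complex.I * (Real.pi : ℂ) / 2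
  else Complex.log (1 + 2 / (z ^ 2 - 2)) / 2

/-- `γ₀ = 2/(e^{2√3π/9} − 1)`. -/
noncomputable def γ0 : ℝ := 2 / (Real.exp (2 * Real.sqrt 3 * Real.pi / 9) - 1)

/-- `W` on real `x` with `x² > 2`: the principal logarithm of a positive real. -/
lemma Wfun_ofReal' {x : ℝ} (hx : 2 < x ^ 2) (hx0 : 0 < x) :
    Wfun x = ((Real.log (1 + 2 / (x ^ 2 - 2)) / 2 : ℝ) : ℂ) := by
  have ht : (0:ℝ) < x ^ 2 - 2 := by linarith
  have hxs : ¬ (x : ℂ).re < Real.sqrt 2 := by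
    rw [not_lt, Complex.ofReal_re]
    calc Real.sqrt 2 ≤ Real.sqrt (x ^ 2) := Real.sqrt_le_sqrt hx.le
    _ = x := Real.sqrt_sq hx0.le
  have hu : (0:ℝ) < 1 + 2 / (x ^ 2 - 2) := by positivity
  have hcast : (1 + 2 / ((x:ℂ) ^ 2 - 2)) = ((1 + 2 / (x ^ 2 - 2) : ℝ) : ℂ) := by
    push_cast; ring
  rw [Wfun, if_neg (by tauto), hcast, ← Complex.ofReal_log hu.le]
  push_cast; ring

lemma Wfun_part1_fwd {z : ℂ} (hre : 0 < z.re) (him : 0 < z.im) :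
    -(Real.pi / 2) < (Complex.log (1 + 2 / (z ^ 2 - 2)) / 2).im ∧
      (Complex.log (1 + 2 / (z ^ 2 - 2)) / 2).im < 0 := by
  have hdim : 0 < (z ^ 2 - 2).im := by
    simp [pow_two, Complex.mul_im, Complex.sub_im]
    nlinarith
  have hd : z ^ 2 - 2 ≠ 0 := fun h => by simp [h] at hdim
  set u := 1 + 2 / (z ^ 2 - 2) with hu
  have hnsq : 0 < Complex.normSq (z ^ 2 - 2) := Complex.normSq_pos.mpr hd
  have huim : u.im < 0 := by
    have : u.im = -(2 * (z ^ 2 - 2).im) / Complex.normSq (z ^ 2 - 2) := by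
      simp [hu, Complex.add_im, Complex.div_im]
      ring
    rw [this]
    apply div_neg_of_neg_of_pos (by linarith) hnsq
  have harg : Complex.arg u < 0 := Complex.arg_neg_iff.mpr huim
  have harg2 : -Real.pi < Complex.arg u := Complex.neg_pi_lt_arg u
  have him2 : (Complex.log u / 2).im = Complex.arg u / 2 := by
    rw [show (2:ℂ) = ((2:ℝ):ℂ) by norm_num, Complex.div_ofReal_im, Complex.log_im]
  rw [him2]
  constructor <;> linarith

lemma Wfun_part1_bwd {w : ℂ} (h1 : -(Real.pi / 2) < w.im) (h2 : w.im < 0) :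
    ∃ z : ℂ, (0 < z.re ∧ 0 < z.im) ∧ Wfun z = w := by
  have hpi := Real.pi_pos
  set u := Complex.exp (2 * w) with hu
  have huim : u.im < 0 := by
    rw [hu, Complex.exp_im]
    have h2w : ((2 : ℂ) * w).im = 2 * w.im := by simp
    rw [h2w]
    have hsin : Real.sin (2 * w.im) < 0 :=
      Real.sin_neg_of_neg_of_neg_pi_lt (by linarith) (by linarith)
    have := Real.exp_pos ((2 * w).re)
    rw [show ((2:ℂ) * w).re = 2 * w.re by simp] at this ⊢
    exact mul_neg_of_pos_of_neg this hsin
  have hu1 : u - 1 ≠ 0 := fun h => by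
    have : (u - 1).im = 0 := by rw [h]; simp
    simp [Complex.sub_im] at this; linarith
  set ζ := 2 * u / (u - 1) with hζ
  have hnsq : 0 < Complex.normSq (u - 1) := Complex.normSq_pos.mpr hu1
  have hζim : 0 < ζ.im := by
    have : ζ.im = -(2 * u.im) / Complex.normSq (u - 1) := by
      simp [hζ, Complex.div_im, Complex.mul_im, Complex.mul_re,
        Complex.sub_re, Complex.sub_im]
      ring
    rw [this]
    exact div_pos (by linarith) hnsq
  have hζ0 : ζ ≠ 0 := fun h => by simp [h] at hζim
  have hargpos : 0 < Complex.arg ζ := by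
    rcases (Complex.arg_nonneg_iff.mpr hζim.le).lt_or_eq with h | h
    · exact h
    · exfalso
      have := (Complex.arg_eq_zero_iff.mp h.symm).2
      linarith
  have harglt : Complex.arg ζ < Real.pi :=
    Complex.arg_lt_pi_iff.mpr (Or.inr hζim.ne')
  set z := Complex.exp (Complex.log ζ / 2) with hz
  have hzim2 : (Complex.log ζ / 2).im = Complex.arg ζ / 2 := by
    rw [show (2:ℂ) = ((2:ℝ):ℂ) by norm_num, Complex.div_ofReal_im, Complex.log_im]
  have hzre : 0 < z.re := by
    rw [hz, Complex.exp_re, hzim2]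
    have hcos : 0 < Real.cos (Complex.arg ζ / 2) :=
      Real.cos_pos_of_mem_Ioo ⟨by linarith, by linarith⟩
    positivity
  have hzim : 0 < z.im := by
    rw [hz, Complex.exp_im, hzim2]
    have hsin : 0 < Real.sin (Complex.arg ζ / 2) :=
      Real.sin_pos_of_pos_of_lt_pi (by linarith) (by linarith)
    positivity
  have hz2 : z ^ 2 = ζ := by
    rw [hz, pow_two, ← Complex.exp_add]
    rw [show Complex.log ζ / 2 + Complex.log ζ / 2 = Complex.log ζ by ring]
    exact Complex.exp_log hζ0
  have hden : z ^ 2 - 2 = 2 / (u - 1) := by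
    rw [hz2, hζ]; field_simp; ring
  have hden0 : z ^ 2 - 2 ≠ 0 := by
    rw [hden]; exact div_ne_zero two_ne_zero hu1
  have hval : 1 + 2 / (z ^ 2 - 2) = u := by
    rw [hden]
    field_simp
    ring
  refine ⟨z, ⟨hzre, hzim⟩, ?_⟩
  rw [Wfun, if_neg (fun h => by linarith [h.1]), hval, hu,
    Complex.log_exp (by simp; linarith) (by simp; nlinarith)]
  ring

lemma E_facts : 1 < Real.exp (2 * Real.sqrt 3 * Real.pi / 9) ∧ 0 < γ0 := by
  have h3 : 0 < Real.sqrt 3 := Real.sqrt_pos.mpr (by norm_num)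
  have hpi := Real.pi_pos
  have hE : 1 < Real.exp (2 * Real.sqrt 3 * Real.pi / 9) := by
    rw [show (1:ℝ) = Real.exp 0 by simp]
    exact Real.exp_lt_exp.mpr (by positivity)
  exact ⟨hE, div_pos two_pos (by linarith)⟩

/-- `W(Q) = {w : −π/2 < Im w < 0}` where `Q` is the open first quadrant, and
`W((√(2+γ₀), ∞)) = (0, √3·π/9)`. -/
theorem Wfun_images :
    Wfun '' {z : ℂ | 0 < z.re ∧ 0 < z.im}
      = {w : ℂ | -(Real.pi / 2) < w.im ∧ w.im < 0} ∧
    Wfun '' ((fun x : ℝ => (x : ℂ)) '' Set.Ioi (Real.sqrt (2 + γ0)))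
      = (fun x : ℝ => (x : ℂ)) '' Set.Ioo 0 (Real.sqrt 3 * Real.pi / 9) := by
  constructor
  · ext w
    constructor
    · rintro ⟨z, ⟨hre, him⟩, rfl⟩
      have hw : Wfun z = Complex.log (1 + 2 / (z ^ 2 - 2)) / 2 := by
        rw [Wfun, if_neg (fun h => by linarith [h.1])]
      rw [hw]
      exact Wfun_part1_fwd hre him
    · rintro ⟨h1, h2⟩
      obtain ⟨z, hz, hzw⟩ := Wfun_part1_bwd h1 h2
      exact ⟨z, hz, hzw⟩
  · obtain ⟨hE, hγ⟩ := E_facts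
    set E := Real.exp (2 * Real.sqrt 3 * Real.pi / 9) with hEdef
    have hE1 : 0 < E - 1 := by linarith
    have hγE : 2 / γ0 = E - 1 := by rw [γ0]; field_simp; rfl
    have hlogE : Real.log E = 2 * Real.sqrt 3 * Real.pi / 9 := Real.log_exp _
    ext w
    constructor
    · rintro ⟨-, ⟨x, hx, rfl⟩, rfl⟩
      rw [Set.mem_Ioi] at hx
      have hx0 : 0 < x := (Real.sqrt_nonneg _).trans_lt hx
      have hx2 : 2 + γ0 < x ^ 2 := (Real.sqrt_lt' hx0).mp hx
      have ht : γ0 < x ^ 2 - 2 := by linarith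
      have ht0 : (0:ℝ) < x ^ 2 - 2 := by linarith
      set u := 1 + 2 / (x ^ 2 - 2) with hudef
      have hu1 : 1 < u := by
        have : 0 < 2 / (x ^ 2 - 2) := by positivity
        simp [hudef]; linarith
      have huE : u < E := by
        have h2 : 2 / (x ^ 2 - 2) < 2 / γ0 := by
          apply div_lt_div_of_pos_left two_pos hγ ht
        rw [hγE] at h2
        simp [hudef]; linarith
      rw [Wfun_ofReal' (by linarith) hx0]
      refine ⟨Real.log u / 2, ⟨?_, ?_⟩, rfl⟩
      · have := Real.log_pos hu1; linarith
      · have : Real.log u < Real.log E := Real.log_lt_log (by linarith) huE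
        rw [hlogE] at this; linarith
    · rintro ⟨y, ⟨hy0, hy1⟩, rfl⟩
      set u := Real.exp (2 * y) with hudef
      have hu1 : 1 < u := by
        rw [hudef, show (1:ℝ) = Real.exp 0 by simp]
        exact Real.exp_lt_exp.mpr (by linarith)
      have huE : u < E := by
        rw [hudef, hEdef]
        exact Real.exp_lt_exp.mpr (by linarith)
      set t := 2 / (u - 1) with htdef
      have ht0 : 0 < t := div_pos two_pos (by linarith)
      have htγ : γ0 < t := by
        rw [htdef, γ0, ← hEdef]
        apply div_lt_div_of_pos_left two_pos (by linarith) (by linarith)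
      set x := Real.sqrt (2 + t) with hxdef
      have hx2 : x ^ 2 = 2 + t := Real.sq_sqrt (by linarith)
      have hxmem : Real.sqrt (2 + γ0) < x :=
        Real.sqrt_lt_sqrt (by linarith) (by linarith)
      have hx0 : 0 < x := Real.sqrt_pos.mpr (by linarith)
      refine ⟨(x : ℂ), ⟨x, hxmem, rfl⟩, ?_⟩
      rw [Wfun_ofReal' (by rw [hx2]; linarith) hx0]
      have : 1 + 2 / (x ^ 2 - 2) = u := by
        rw [hx2, show 2 + t - 2 = t by ring, htdef]
        field_simp
        ring
      rw [this, hudef, Real.log_exp]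
      norm_num
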